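/- Let x ∈ R^n with ‖x‖₂ ≥ a√n and ‖x‖_∞ ≤ b, and let (δ_i)_{i=1}^n be independent selectors of mean δ ∈ (0,1]. Then Pr(Σ_{i=1}^n δ_i x_i² ≤ (δ/2)‖x‖₂²) ≤ 2 exp(−c δ a² n/b²) for an absolute constant c > 0. -/

import Mathlib

open MeasureTheory ProbabilityTheory Real Finset

noncomputable def l2norm {n : ℕ} (v : Fin n → ℝ) : ℝ := Real.sqrt (∑ i, v i ^ 2)

lemma exp_neg_le_quadratic {u : ℝ} (hu : 0 ≤ u) :
    Real.exp (-u) ≤ 1 - u + u ^ 2 / 2 := by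
  have h := Real.quadratic_le_exp_of_nonneg hu
  have hp : (0:ℝ) < 1 + u + u ^ 2 / 2 := by positivity
  have h1 : Real.exp (-u) * Real.exp u = 1 := by rw [← Real.exp_add]; simp
  have h2 := Real.exp_pos (-u)
  have h3 : Real.exp (-u) * (1 + u + u ^ 2 / 2) ≤ 1 := by
    calc Real.exp (-u) * (1 + u + u ^ 2 / 2) ≤ Real.exp (-u) * Real.exp u :=
          mul_le_mul_of_nonneg_left h h2.le
      _ = 1 := h1
  have h4 : (1:ℝ) ≤ (1 - u + u ^ 2 / 2) * (1 + u + u ^ 2 / 2) := by nlinarith [sq_nonneg u, sq_nonneg (u^2)]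
  nlinarith [mul_pos h2 hp]

/-- Bernstein-type lower bound for the selected part of a spread-out vector. -/
theorem stmt16 :
    ∃ c > (0 : ℝ),
      ∀ (n : ℕ), 0 < n →
      ∀ (Ω : Type) (_ : MeasurableSpace Ω) (μ : Measure Ω) (_ : IsProbabilityMeasure μ)
        (δsel : Fin n → Ω → ℝ),
        (∀ i, Measurable (δsel i)) →
        (∀ i ω, δsel i ω = 0 ∨ δsel i ω = 1) →
        iIndepFun δsel μ →
      ∀ (δ : ℝ), 0 < δ → δ ≤ 1 → (∀ i, (∫ ω, δsel i ω ∂μ) = δ) →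
      ∀ (x : Fin n → ℝ) (a b : ℝ), 0 < a → 0 < b →
        a * Real.sqrt n ≤ l2norm x → (∀ i, |x i| ≤ b) →
        μ {ω | (∑ i, δsel i ω * x i ^ 2) ≤ δ / 2 * l2norm x ^ 2} ≤
          ENNReal.ofReal (2 * Real.exp (-(c * δ * a ^ 2 * n / b ^ 2))) := by
  refine ⟨1/8, by norm_num, ?_⟩
  intro n hn Ω mΩ μ hprob δsel hmeas h01 hindep δ hδpos hδle hmean x a b ha hb hnorm hbound
  set T := ∑ i, x i ^ 2 with hT
  have hTnn : 0 ≤ T := Finset.sum_nonneg fun i _ => sq_nonneg _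
  have hl2 : l2norm x ^ 2 = T := Real.sq_sqrt hTnn
  have hb2 : (0:ℝ) < b ^ 2 := by positivity
  set t : ℝ := -(1/(2*b^2)) with ht
  have htle : t ≤ 0 := by
    have : (0:ℝ) ≤ 1/(2*b^2) := by positivity
    rw [ht]; linarith
  set Y : Fin n → Ω → ℝ := fun i => (fun r => r * x i ^ 2) ∘ δsel i with hY
  have hYmeas : ∀ i, Measurable (Y i) := fun i => (measurable_id.mul_const _).comp (hmeas i)
  have hYindep : iIndepFun Y μ :=
    hindep.comp _ fun i => measurable_id.mul_const _
  have hexp : ∀ i ω, Real.exp (t * Y i ω) = 1 + δsel i ω * (Real.exp (t * x i ^ 2) - 1) := by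
    intro i ω
    rcases h01 i ω with h | h <;> simp [hY, Function.comp, h]
  have hδint : ∀ i, Integrable (δsel i) μ := by
    intro i
    refine ⟨(hmeas i).aestronglyMeasurable, ?_⟩
    refine MeasureTheory.HasFiniteIntegral.of_bounded (C := 1) ?_
    filter_upwards with ω
    rcases h01 i ω with h | h <;> simp [h]
  have hint : ∀ i, Integrable (fun ω => Real.exp (t * Y i ω)) μ := by
    intro i
    have heq : (fun ω => Real.exp (t * Y i ω))
        = fun ω => 1 + δsel i ω * (Real.exp (t * x i ^ 2) - 1) := funext (hexp i)
    rw [heq]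
    exact (integrable_const 1).add ((hδint i).mul_const _)
  have hmgf : ∀ i, mgf (Y i) μ t = 1 + δ * (Real.exp (t * x i ^ 2) - 1) := by
    intro i
    rw [mgf]
    simp_rw [hexp i]
    rw [integral_add (integrable_const 1) ((hδint i).mul_const _), integral_const,
      integral_mul_const, hmean i]
    simp
  have hsum_int : Integrable (fun ω => Real.exp (t * (∑ i, Y i) ω)) μ :=
    hYindep.integrable_exp_mul_sum hYmeas fun i _ => hint i
  have hcher := measure_le_le_exp_mul_mgf (μ := μ) (X := ∑ i, Y i) (t := t) (δ/2 * T) htle hsum_int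
  have hset : {ω | (∑ i, δsel i ω * x i ^ 2) ≤ δ / 2 * l2norm x ^ 2}
      = {ω | (∑ i, Y i) ω ≤ δ/2 * T} := by
    ext ω
    simp [hY, Function.comp, hl2]
  have hprod : mgf (∑ i, Y i) μ t ≤ Real.exp (∑ i, δ * (Real.exp (t * x i ^ 2) - 1)) := by
    rw [hYindep.mgf_sum hYmeas, Real.exp_sum]
    refine Finset.prod_le_prod (fun i _ => ?_) (fun i _ => ?_)
    · rw [hmgf i]
      nlinarith [Real.exp_pos (t * x i ^ 2)]
    · rw [hmgf i]
      have := Real.add_one_le_exp (δ * (Real.exp (t * x i ^ 2) - 1))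
      linarith
  have hper : ∀ i, Real.exp (t * x i ^ 2) - 1 ≤ -(3 * x i ^ 2 / (8 * b ^ 2)) := by
    intro i
    have hu : 0 ≤ x i ^ 2 / (2 * b ^ 2) := by positivity
    have h1 := exp_neg_le_quadratic hu
    have h2 : x i ^ 2 ≤ b ^ 2 := by
      have := abs_le.mp (hbound i); nlinarith
    have ht' : t * x i ^ 2 = -(x i ^ 2 / (2 * b ^ 2)) := by rw [ht]; ring
    have h3 : (x i ^ 2 / (2 * b ^ 2)) ^ 2 ≤ x i ^ 2 / (4 * b ^ 2) := by
      rw [div_pow, div_le_div_iff₀ (by positivity) (by positivity)]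
      nlinarith [mul_le_mul_of_nonneg_right h2 (sq_nonneg (x i)), sq_nonneg (x i), hb2.le,
        mul_nonneg (sq_nonneg (x i)) hb2.le]
    rw [ht']
    have h4 : -(x i ^ 2 / (2 * b ^ 2)) + (x i ^ 2 / (2 * b ^ 2)) ^ 2 / 2
        ≤ -(3 * x i ^ 2 / (8 * b ^ 2)) := by
      have e1 : x i ^ 2 / (2 * b ^ 2) - x i ^ 2 / (8 * b ^ 2) = 3 * x i ^ 2 / (8 * b ^ 2) := by
        ring
      have e2 : x i ^ 2 / (4 * b ^ 2) = 2 * (x i ^ 2 / (8 * b ^ 2)) := by ring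
      linarith [h3]
    linarith
  have hsumbound : ∑ i, δ * (Real.exp (t * x i ^ 2) - 1) ≤ δ * (-(3 * T / (8 * b ^ 2))) := by
    have hs : ∑ i, -(3 * x i ^ 2 / (8 * b ^ 2)) = -(3 * T / (8 * b ^ 2)) := by
      rw [Finset.sum_neg_distrib]
      congr 1
      rw [hT, Finset.mul_sum, Finset.sum_div]
    calc ∑ i, δ * (Real.exp (t * x i ^ 2) - 1) = δ * ∑ i, (Real.exp (t * x i ^ 2) - 1) := by
          rw [Finset.mul_sum]
      _ ≤ δ * ∑ i, -(3 * x i ^ 2 / (8 * b ^ 2)) :=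
          mul_le_mul_of_nonneg_left (Finset.sum_le_sum fun i _ => hper i) hδpos.le
      _ = δ * (-(3 * T / (8 * b ^ 2))) := by rw [hs]
  have hTn : a ^ 2 * n ≤ T := by
    have h2 : (a * Real.sqrt n) ^ 2 ≤ (Real.sqrt T) ^ 2 := by
      have : l2norm x = Real.sqrt T := rfl
      rw [← this]
      exact pow_le_pow_left₀ (by positivity) hnorm 2
    rw [Real.sq_sqrt hTnn, mul_pow, Real.sq_sqrt (Nat.cast_nonneg n)] at h2
    exact h2
  have hfinal : -t * (δ/2 * T) + δ * (-(3 * T / (8 * b ^ 2)))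
      ≤ -(1/8 * δ * a ^ 2 * n / b ^ 2) := by
    have e1 : -t * (δ/2 * T) + δ * (-(3 * T / (8 * b ^ 2))) = -(δ * T / (8 * b ^ 2)) := by
      rw [ht]; field_simp; ring
    have e2 : -(1/8 * δ * a ^ 2 * (n:ℝ) / b ^ 2) = -(δ * (a ^ 2 * n) / (8 * b ^ 2)) := by ring
    rw [e1, e2]
    have hmul : δ * (a ^ 2 * n) ≤ δ * T := mul_le_mul_of_nonneg_left hTn hδpos.le
    have hmul2 : δ * (a ^ 2 * n) * (8 * b ^ 2)⁻¹ ≤ δ * T * (8 * b ^ 2)⁻¹ :=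
      mul_le_mul_of_nonneg_right hmul (by positivity)
    rw [div_eq_mul_inv, div_eq_mul_inv]
    exact neg_le_neg hmul2
  have hreal : (μ {ω | (∑ i, Y i) ω ≤ δ/2 * T}).toReal
      ≤ 2 * Real.exp (-(1/8 * δ * a ^ 2 * n / b ^ 2)) := by
    refine hcher.trans ?_
    calc Real.exp (-t * (δ/2 * T)) * mgf (∑ i, Y i) μ t
        ≤ Real.exp (-t * (δ/2 * T)) * Real.exp (∑ i, δ * (Real.exp (t * x i ^ 2) - 1)) := by
          exact mul_le_mul_of_nonneg_left hprod (Real.exp_pos _).le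
      _ = Real.exp (-t * (δ/2 * T) + ∑ i, δ * (Real.exp (t * x i ^ 2) - 1)) := by
          rw [← Real.exp_add]
      _ ≤ Real.exp (-(1/8 * δ * a ^ 2 * n / b ^ 2)) := by
          apply Real.exp_le_exp.mpr
          linarith [hsumbound, hfinal]
      _ ≤ 2 * Real.exp (-(1/8 * δ * a ^ 2 * n / b ^ 2)) := by
          nlinarith [Real.exp_pos (-(1/8 * δ * a ^ 2 * (n:ℝ) / b ^ 2))]
  rw [hset, ← ENNReal.ofReal_toReal (measure_ne_top μ _)]
  exact ENNReal.ofReal_le_ofReal hreal
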